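/- Let U : ℝ → M_n(ℂ) be a one-parameter family of matrices with U(t) unitary for every t, let A be an n×n Hermitian matrix, and suppose U is differentiable at t₀ with derivative U′(t₀) = i·A·U(t₀). Let θ : ℝ → ℝ and a : ℝ → ℂ^n be differentiable at t₀ and satisfy, for all t in a neighborhood of t₀, that a(t) is a unit vector and U(t) a(t) = e^{iθ(t)} a(t). Then θ′(t₀) = ⟨a(t₀), A a(t₀)⟩ (which is a real number since A is Hermitian). -/

import Mathlib

/-- Let `U : ℝ → M_n(ℂ)` be a family of unitary matrices, differentiable (entrywise) at
`t₀` with derivative `i • A * U t₀` for a Hermitian `A`.  If `θ : ℝ → ℝ` and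
`a : ℝ → ℂ^n` are differentiable at `t₀` and on a neighborhood of `t₀` the vector
`a t` is a unit eigenvector of `U t` with eigenvalue `e^{iθ(t)}`, then
`θ'(t₀) = ⟨a t₀, A (a t₀)⟩`. -/
theorem stmt4 {n : ℕ} (U : ℝ → Matrix (Fin n) (Fin n) ℂ)
    (A : Matrix (Fin n) (Fin n) ℂ) (hA : A.IsHermitian) (t₀ : ℝ)
    (hUuni : ∀ t, U t ∈ Matrix.unitaryGroup (Fin n) ℂ)
    (hderiv : ∀ p q, HasDerivAt (fun t => U t p q) ((Complex.I • (A * U t₀)) p q) t₀)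
    (θ : ℝ → ℝ) (θ' : ℝ) (hθ : HasDerivAt θ θ' t₀)
    (a : ℝ → (Fin n → ℂ)) (a' : Fin n → ℂ)
    (haDeriv : ∀ p, HasDerivAt (fun t => a t p) (a' p) t₀)
    (hnorm : ∀ᶠ t in nhds t₀, dotProduct (star (a t)) (a t) = 1)
    (heig : ∀ᶠ t in nhds t₀,
      (U t).mulVec (a t) = Complex.exp ((θ t : ℂ) * Complex.I) • a t) :
    (θ' : ℂ) = dotProduct (star (a t₀)) (A.mulVec (a t₀)) := by
  set l : ℂ := Complex.exp ((θ t₀ : ℂ) * Complex.I) with hl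
  have hUa : (U t₀).mulVec (a t₀) = l • a t₀ := heig.self_of_nhds
  have hll : l * (starRingEnd ℂ) l = 1 := by
    rw [hl, ← Complex.exp_conj, ← Complex.exp_add]
    simp [← Complex.exp_add]
  -- derivative of the norm is zero
  have hNder : HasDerivAt (fun t => dotProduct (star (a t)) (a t))
      (∑ p, (star (a' p) * a t₀ p + star (a t₀ p) * a' p)) t₀ := by
    have hrw : (fun t => dotProduct (star (a t)) (a t)) =
        fun t => ∑ p, star (a t p) * a t p := by
      funext t; simp [dotProduct]
    rw [hrw]
    exact HasDerivAt.fun_sum fun p _ => ((haDeriv p).star.mul (haDeriv p))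
  have hNzero : ∑ p, (star (a' p) * a t₀ p + star (a t₀ p) * a' p) = 0 :=
    hNder.unique ((hasDerivAt_const t₀ (1 : ℂ)).congr_of_eventuallyEq hnorm)
  have hX : dotProduct (star a') (a t₀) + dotProduct (star (a t₀)) a' = 0 := by
    rw [← hNzero]
    simp [dotProduct, Finset.sum_add_distrib]
  -- derivative of ⟨a t, U t (a t)⟩
  have hD : HasDerivAt (fun t => dotProduct (star (a t)) ((U t).mulVec (a t)))
      (∑ p, ∑ q, ((star (a' p) * U t₀ p q + star (a t₀ p) * (Complex.I • (A * U t₀)) p q)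
        * a t₀ q + star (a t₀ p) * U t₀ p q * a' q)) t₀ := by
    have hrw : (fun t => dotProduct (star (a t)) ((U t).mulVec (a t))) =
        fun t => ∑ p, ∑ q, star (a t p) * U t p q * a t q := by
      funext t
      simp [dotProduct, Matrix.mulVec, Finset.mul_sum, mul_assoc]
    rw [hrw]
    exact HasDerivAt.fun_sum fun p _ => HasDerivAt.fun_sum fun q _ =>
      (((haDeriv p).star.mul (hderiv p q)).mul (haDeriv q))
  -- derivative of exp(i θ t)
  have hexp : HasDerivAt (fun t => Complex.exp ((θ t : ℂ) * Complex.I))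
      (l * ((θ' : ℂ) * Complex.I)) t₀ :=
    (hθ.ofReal_comp.mul_const Complex.I).cexp
  have heq : (fun t => dotProduct (star (a t)) ((U t).mulVec (a t)))
      =ᶠ[nhds t₀] fun t => Complex.exp ((θ t : ℂ) * Complex.I) := by
    filter_upwards [hnorm, heig] with t h1 h2
    rw [h2, dotProduct_smul, h1, smul_eq_mul, mul_one]
  have hEq : (∑ p, ∑ q, ((star (a' p) * U t₀ p q
        + star (a t₀ p) * (Complex.I • (A * U t₀)) p q) * a t₀ q
        + star (a t₀ p) * U t₀ p q * a' q)) = l * ((θ' : ℂ) * Complex.I) :=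
    hD.unique (hexp.congr_of_eventuallyEq heq)
  -- rewrite the sum as dot products
  have hsum : (∑ p, ∑ q, ((star (a' p) * U t₀ p q
        + star (a t₀ p) * (Complex.I • (A * U t₀)) p q) * a t₀ q
        + star (a t₀ p) * U t₀ p q * a' q)) =
      dotProduct (star a') ((U t₀).mulVec (a t₀))
      + dotProduct (star (a t₀)) ((Complex.I • (A * U t₀)).mulVec (a t₀))
      + dotProduct (star (a t₀)) ((U t₀).mulVec a') := by
    simp only [dotProduct, Matrix.mulVec, Finset.mul_sum, Pi.star_apply,
      Finset.sum_add_distrib, ← Finset.sum_add_distrib]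
    refine Finset.sum_congr rfl fun p _ => Finset.sum_congr rfl fun q _ => by ring
  rw [hsum] at hEq
  -- star (a t₀) ᵥ* U t₀ = l • star (a t₀)
  have hu : star (U t₀) * U t₀ = 1 := (hUuni t₀).1
  have hUH : (star (U t₀)).mulVec (a t₀) = (starRingEnd ℂ) l • a t₀ := by
    have h1 : (star (U t₀)).mulVec ((U t₀).mulVec (a t₀)) = a t₀ := by
      rw [Matrix.mulVec_mulVec, hu, Matrix.one_mulVec]
    rw [hUa, Matrix.mulVec_smul] at h1
    calc (star (U t₀)).mulVec (a t₀)
        = ((starRingEnd ℂ) l * l) • (star (U t₀)).mulVec (a t₀) := by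
          rw [mul_comm, hll, one_smul]
      _ = (starRingEnd ℂ) l • a t₀ := by rw [mul_smul, h1]
  have hvec : Matrix.vecMul (star (a t₀)) (U t₀) = l • star (a t₀) := by
    have := congrArg star hUH
    rw [Matrix.star_eq_conjTranspose, Matrix.star_mulVec, Matrix.conjTranspose_conjTranspose, star_smul] at this
    rw [this]
    simp
  have hterm3 : dotProduct (star (a t₀)) ((U t₀).mulVec a')
      = l * dotProduct (star (a t₀)) a' := by
    rw [Matrix.dotProduct_mulVec, hvec, smul_dotProduct, smul_eq_mul]
  have hterm1 : dotProduct (star a') ((U t₀).mulVec (a t₀))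
      = l * dotProduct (star a') (a t₀) := by
    rw [hUa, dotProduct_smul, smul_eq_mul]
  have hterm2 : dotProduct (star (a t₀)) ((Complex.I • (A * U t₀)).mulVec (a t₀))
      = Complex.I * (l * dotProduct (star (a t₀)) (A.mulVec (a t₀))) := by
    rw [Matrix.smul_mulVec, ← Matrix.mulVec_mulVec, hUa, Matrix.mulVec_smul,
      dotProduct_smul, dotProduct_smul]
    simp [mul_comm]
  rw [hterm1, hterm2, hterm3] at hEq
  have hl0 : Complex.I * l ≠ 0 := mul_ne_zero Complex.I_ne_zero (Complex.exp_ne_zero _)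
  have h3 : (Complex.I * l) * dotProduct (star (a t₀)) (A.mulVec (a t₀))
      = (Complex.I * l) * (θ' : ℂ) := by linear_combination hEq - l * hX
  exact (mul_left_cancel₀ hl0 h3).symm
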